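/- Let n ≥ 1, let c ∈ ℂ*, let m⁻, m⁺ ≥ 0 be integers, and set Q(x) = c·(x-1)^{m⁻}·(x+1)^{m⁺}. If A ∈ ℂ[x] satisfies A(x)·Q(x) = Q(T_n(x)), then A(x) = ((T_n(x)-1)/(x-1))^{m⁻}·((T_n(x)+1)/(x+1))^{m⁺} and A(1) = n^{2·m⁻}. -/
import Mathlib


open Polynomial Polynomial.Chebyshev

private lemma T_eval_one' (k : ℤ) : (T ℂ k).eval 1 = 1 := by
  induction k using Polynomial.Chebyshev.induct with
  | zero => simp
  | one => simp
  | add_two n h1 h2 => simp [T_add_two, h1, h2]; norm_num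
  | neg_add_one n h1 h2 =>
      have := T_sub_one ℂ (-n)
      rw [show (-(n:ℤ) - 1) = (-(n:ℤ)) - 1 by ring, this]
      simp only [eval_sub, eval_mul, eval_ofNat, eval_X, h1, h2]
      norm_num

private lemma U_eval_one' (k : ℤ) : (U ℂ k).eval 1 = (k : ℂ) + 1 := by
  induction k using Polynomial.Chebyshev.induct with
  | zero => simp
  | one => simp; norm_num
  | add_two n h1 h2 =>
      rw [U_add_two]
      simp only [eval_sub, eval_mul, eval_ofNat, eval_X, h1, h2]
      push_cast
      ring
  | neg_add_one n h1 h2 =>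
      have := U_sub_one ℂ (-n)
      rw [show (-(n:ℤ) - 1) = (-(n:ℤ)) - 1 by ring, this]
      simp only [eval_sub, eval_mul, eval_ofNat, eval_X, h1, h2]
      push_cast
      ring

theorem A_from_Cplus_equivariance (n : ℕ) (hn : 1 ≤ n) (c : ℂ) (hc : c ≠ 0)
    (mm mp : ℕ) (A : ℂ[X])
    (hQ : A * (C c * (X - 1) ^ mm * (X + 1) ^ mp) =
      (C c * (X - 1) ^ mm * (X + 1) ^ mp).comp (T ℂ n)) :
    A * (X - 1) ^ mm * (X + 1) ^ mp = (T ℂ n - 1) ^ mm * (T ℂ n + 1) ^ mp ∧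
    A.eval 1 = (n : ℂ) ^ (2 * mm) := by
  rw [mul_comp, mul_comp, C_comp, pow_comp, pow_comp, sub_comp, add_comp, X_comp,
    one_comp] at hQ
  have hCc : (C c : ℂ[X]) ≠ 0 := fun h => hc (by simpa using congrArg (eval 0) h)
  have key : A * (X - 1) ^ mm * (X + 1) ^ mp = (T ℂ n - 1) ^ mm * (T ℂ n + 1) ^ mp := by
    apply mul_left_cancel₀ hCc
    linear_combination hQ
  refine ⟨key, ?_⟩
  -- split off the (X - 1) factor of T n - 1
  have hroot : (X - C (1:ℂ)) ∣ (T ℂ n - 1) := by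
    rw [dvd_iff_isRoot]
    simp [IsRoot, T_eval_one']
  obtain ⟨B1, hB1⟩ := hroot
  rw [map_one] at hB1
  have hB1e : B1.eval 1 = (n : ℂ) ^ 2 := by
    have hd : derivative (T ℂ n) = B1 + (X - 1) * derivative B1 := by
      have := congrArg derivative hB1
      simp only [derivative_sub, derivative_one, sub_zero, derivative_mul, derivative_X,
        one_mul] at this
      linear_combination this
    have he := congrArg (eval 1) hd
    simp only [eval_add, eval_mul, eval_sub, eval_X, eval_one, sub_self, zero_mul,
      add_zero] at he
    rw [T_derivative_eq_U] at he
    simp only [eval_mul, eval_intCast, U_eval_one'] at he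
    rw [← he]
    push_cast
    ring
  rw [hB1, mul_pow] at key
  have hXne : ((X:ℂ[X]) - 1) ^ mm ≠ 0 := by
    apply pow_ne_zero
    simpa using X_sub_C_ne_zero (1:ℂ)
  have h3 : A * (X + 1) ^ mp = B1 ^ mm * (T ℂ n + 1) ^ mp :=
    mul_left_cancel₀ hXne (by linear_combination key)
  have he3 := congrArg (eval 1) h3
  simp only [eval_mul, eval_pow, eval_add, eval_X, eval_one, T_eval_one', hB1e] at he3
  have h2 : ((1:ℂ) + 1) ^ mp ≠ 0 := by norm_num
  have := mul_right_cancel₀ h2 he3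
  rw [this, ← pow_mul]
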